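/- Let n ≥ 2 and let π⁺, π⁻ be subsets of the simple roots π of sl_n with π⁺ ∪ π⁻ = π. (a) Let r ≥ 2 and a_1 < a_2 < … < a_r, b_1,…,b_r ∈ [1,n] be such that ε_{a_i} − ε_{b_i} ∈ (−K) ∩ Δ⁺ for each i, and b_{i+1} ≠ a_i for 1 ≤ i ≤ r−1. Then ε_{b_{i+1}} − ε_{a_i} is a root lying in K for all 1 ≤ i ≤ r−1. (b) Let s ≥ 2 and a'_1 < a'_2 < … < a'_s, b'_1,…,b'_s ∈ [1,n] be such that ε_{a'_j} − ε_{b'_j} ∈ (−K) ∩ Δ⁻ for each j, and b'_j ≠ a'_{j+1} for 1 ≤ j ≤ s−1. Then ε_{b'_j} − ε_{a'_{j+1}} is a root lying in K for all 1 ≤ j ≤ s−1. (Lemma 9.2: joining straightened edges, whose values ε_{a} − ε_{b} lie in −K.) -/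

import Mathlib

open Pointwise

noncomputable def eps (n : ℕ) (i : Fin n) : Fin n → ℝ := Pi.single i 1

/-- The roots of `sl_n`: `ε_i - ε_j` for `i ≠ j`. -/
def Delta (n : ℕ) : Set (Fin n → ℝ) :=
  {v | ∃ i j : Fin n, i ≠ j ∧ v = eps n i - eps n j}

/-- The positive roots: `ε_i - ε_j` for `i < j`. -/
def DeltaPos (n : ℕ) : Set (Fin n → ℝ) :=
  {v | ∃ i j : Fin n, i < j ∧ v = eps n i - eps n j}

/-- The negative roots. -/
def DeltaNeg (n : ℕ) : Set (Fin n → ℝ) := -DeltaPos n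

/-- The simple roots `α_i = ε_i - ε_{i+1}`. -/
def simpleRoots (n : ℕ) : Set (Fin n → ℝ) :=
  {v | ∃ i j : Fin n, (j : ℕ) = (i : ℕ) + 1 ∧ v = eps n i - eps n j}

/-- The set of ℕ-linear combinations of elements of `S`. -/
def Nspan {n : ℕ} (S : Set (Fin n → ℝ)) : Set (Fin n → ℝ) :=
  (AddSubmonoid.closure S : AddSubmonoid (Fin n → ℝ))

/-- `R = (ℕπ⁺ ∪ (−ℕπ⁻)) ∩ Δ`. -/
def Rset (n : ℕ) (Pp Pm : Set (Fin n → ℝ)) : Set (Fin n → ℝ) :=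
  (Nspan Pp ∪ -Nspan Pm) ∩ Delta n

/-- `K = Δ \ R`. -/
def Kset (n : ℕ) (Pp Pm : Set (Fin n → ℝ)) : Set (Fin n → ℝ) :=
  Delta n \ Rset n Pp Pm

/-- `M = R ∩ (−R)`. -/
def Mset (n : ℕ) (Pp Pm : Set (Fin n → ℝ)) : Set (Fin n → ℝ) :=
  Rset n Pp Pm ∩ -Rset n Pp Pm

/-- `R_* = (−R) \ M`. -/
def RstarSet (n : ℕ) (Pp Pm : Set (Fin n → ℝ)) : Set (Fin n → ℝ) :=
  -Rset n Pp Pm \ Mset n Pp Pm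

/-! ### Auxiliary lemmas -/

/-- The prefix-sum functional `v ↦ ∑_{i ≤ m} v i`. -/
noncomputable def auxF (n : ℕ) (m : Fin n) : (Fin n → ℝ) →+ ℝ where
  toFun v := ∑ i ∈ Finset.Iic m, v i
  map_zero' := by simp
  map_add' v w := by simp [Finset.sum_add_distrib]

lemma auxF_eps (n : ℕ) (m i : Fin n) :
    auxF n m (eps n i) = if i ≤ m then 1 else 0 := by
  simp only [auxF, AddMonoidHom.coe_mk, ZeroHom.coe_mk, eps]
  rw [Finset.sum_pi_single']
  simp [Finset.mem_Iic]

lemma auxF_sub_eps (n : ℕ) (m i j : Fin n) :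
    auxF n m (eps n i - eps n j)
      = (if i ≤ m then (1:ℝ) else 0) - (if j ≤ m then 1 else 0) := by
  rw [map_sub, auxF_eps, auxF_eps]

lemma auxF_nonneg (n : ℕ) (S : Set (Fin n → ℝ)) (hS : S ⊆ simpleRoots n) (m : Fin n)
    {v : Fin n → ℝ} (hv : v ∈ AddSubmonoid.closure S) : 0 ≤ auxF n m v := by
  induction hv using AddSubmonoid.closure_induction with
  | mem x hx =>
      obtain ⟨i, j, hj, rfl⟩ := hS hx
      rw [auxF_sub_eps]
      have hle := Fin.le_def (a := i) (b := m)
      have hle2 := Fin.le_def (a := j) (b := m)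
      split_ifs with h1 h2 h2 <;> try norm_num
      exact absurd (hle.mpr (by omega)) h1
  | zero => simp
  | add x y _ _ hx hy => rw [map_add]; positivity

lemma auxF_zero (n : ℕ) (S : Set (Fin n → ℝ)) (hS : S ⊆ simpleRoots n) (m : Fin n)
    (hm : ∀ j : Fin n, (j : ℕ) = (m : ℕ) + 1 → eps n m - eps n j ∉ S)
    {v : Fin n → ℝ} (hv : v ∈ AddSubmonoid.closure S) : auxF n m v = 0 := by
  induction hv using AddSubmonoid.closure_induction with
  | mem x hx =>
      obtain ⟨i, j, hj, rfl⟩ := hS hx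
      have him : i ≠ m := by
        rintro rfl
        exact hm j hj hx
      have hvne : (i : ℕ) ≠ (m : ℕ) := fun h => him (Fin.ext h)
      rw [auxF_sub_eps]
      have hle := Fin.le_def (a := i) (b := m)
      have hle2 := Fin.le_def (a := j) (b := m)
      split_ifs with h1 h2 h2 <;> try norm_num
      · exact absurd (hle2.mpr (by rw [hle] at h1; omega)) h2
      · exact absurd (hle.mpr (by rw [hle2] at h2; omega)) h1
  | zero => simp
  | add x y _ _ hx hy => rw [map_add, hx, hy, add_zero]

lemma aux_telescope (n : ℕ) (S : Set (Fin n → ℝ)) :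
    ∀ (c : ℕ) (a b : Fin n), (b : ℕ) = (a : ℕ) + c →
      (∀ k k' : Fin n, (a : ℕ) ≤ (k : ℕ) → (k' : ℕ) = (k : ℕ) + 1 → (k' : ℕ) ≤ (b : ℕ) →
        eps n k - eps n k' ∈ S) →
      eps n a - eps n b ∈ AddSubmonoid.closure S := by
  intro c
  induction c with
  | zero =>
      intro a b hb _
      have : a = b := Fin.ext (by omega)
      rw [this, sub_self]
      exact AddSubmonoid.zero_mem _
  | succ c ih =>
      intro a b hb hk
      have hbn : (a : ℕ) + c < n := by have := b.isLt; omega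
      set b' : Fin n := ⟨(a : ℕ) + c, hbn⟩ with hb'
      have hb'v : (b' : ℕ) = (a : ℕ) + c := rfl
      have h1 : eps n a - eps n b' ∈ AddSubmonoid.closure S :=
        ih a b' rfl (fun k k' hk1 hk2 hk3 => hk k k' hk1 hk2 (by rw [hb'v] at hk3; omega))
      have h2 : eps n b' - eps n b ∈ S :=
        hk b' b (by simp [hb']) (by simp [hb']; omega) le_rfl
      have h3 := AddSubmonoid.add_mem _ h1 (AddSubmonoid.subset_closure h2)
      have : eps n a - eps n b = (eps n a - eps n b') + (eps n b' - eps n b) := by abel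
      rw [this]; exact h3

lemma aux_eps_inj (n : ℕ) (i j i' j' : Fin n) (hij : i ≠ j)
    (h : eps n i - eps n j = eps n i' - eps n j') : i = i' ∧ j = j' := by
  have e1 : ∀ x y z : Fin n, (eps n x - eps n y) z
      = (if z = x then (1:ℝ) else 0) - (if z = y then 1 else 0) := by
    intro x y z; simp [eps, Pi.single_apply]
  have hi := congrFun h i
  have hj := congrFun h j
  rw [e1, e1] at hi hj
  rw [if_pos rfl, if_neg (fun hh : i = j => hij hh)] at hi
  rw [if_pos rfl, if_neg (fun hh : j = i => hij hh.symm)] at hj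
  constructor
  · by_contra hne
    rw [if_neg (fun hh : i = i' => hne hh)] at hi
    split_ifs at hi <;> norm_num at hi
  · by_contra hne
    rw [if_neg (fun hh : j = j' => hne hh)] at hj
    split_ifs at hj <;> norm_num at hj

/-- A negative root `ε_b − ε_a` (with `a < b`) lies in `K` provided some simple root
`α_k` with `a ≤ k < b` is missing from `π⁻`. -/
lemma aux_neg_in_K (n : ℕ) (Pp Pm : Set (Fin n → ℝ))
    (hPp : Pp ⊆ simpleRoots n) (hPm : Pm ⊆ simpleRoots n) (a b : Fin n) (hab : a < b)
    (k k' : Fin n) (hak : (a : ℕ) ≤ (k : ℕ)) (hk' : (k' : ℕ) = (k : ℕ) + 1)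
    (hkb : (k' : ℕ) ≤ (b : ℕ)) (hkPm : eps n k - eps n k' ∉ Pm) :
    eps n b - eps n a ∈ Kset n Pp Pm := by
  refine ⟨⟨b, a, hab.ne', rfl⟩, ?_⟩
  rintro ⟨h1 | h1, -⟩
  · have h2 := auxF_nonneg n Pp hPp a h1
    rw [auxF_sub_eps, if_pos le_rfl, if_neg (not_le.mpr hab)] at h2
    norm_num at h2
  · have h2 : eps n a - eps n b ∈ AddSubmonoid.closure Pm := by
      have := Set.mem_neg.mp h1
      simpa [Nspan, neg_sub] using this
    have hmnot : ∀ j : Fin n, (j : ℕ) = (k : ℕ) + 1 → eps n k - eps n j ∉ Pm := by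
      intro j hjv hjS
      have : j = k' := Fin.ext (by omega)
      rw [this] at hjS
      exact hkPm hjS
    have hz := auxF_zero n Pm hPm k hmnot h2
    rw [auxF_sub_eps, if_pos (Fin.le_def.mpr hak),
      if_neg (fun hh => by rw [Fin.le_def] at hh; omega)] at hz
    norm_num at hz

/-- A positive root `ε_a − ε_b` (with `a < b`) lies in `K` provided some simple root
`α_k` with `a ≤ k < b` is missing from `π⁺`. -/
lemma aux_pos_in_K (n : ℕ) (Pp Pm : Set (Fin n → ℝ))
    (hPp : Pp ⊆ simpleRoots n) (hPm : Pm ⊆ simpleRoots n) (a b : Fin n) (hab : a < b)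
    (k k' : Fin n) (hak : (a : ℕ) ≤ (k : ℕ)) (hk' : (k' : ℕ) = (k : ℕ) + 1)
    (hkb : (k' : ℕ) ≤ (b : ℕ)) (hkPp : eps n k - eps n k' ∉ Pp) :
    eps n a - eps n b ∈ Kset n Pp Pm := by
  refine ⟨⟨a, b, hab.ne, rfl⟩, ?_⟩
  rintro ⟨h1 | h1, -⟩
  · have hmnot : ∀ j : Fin n, (j : ℕ) = (k : ℕ) + 1 → eps n k - eps n j ∉ Pp := by
      intro j hjv hjS
      have : j = k' := Fin.ext (by omega)
      rw [this] at hjS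
      exact hkPp hjS
    have hz := auxF_zero n Pp hPp k hmnot h1
    rw [auxF_sub_eps, if_pos (Fin.le_def.mpr hak),
      if_neg (fun hh => by rw [Fin.le_def] at hh; omega)] at hz
    norm_num at hz
  · have h2 : eps n b - eps n a ∈ AddSubmonoid.closure Pm := by
      have := Set.mem_neg.mp h1
      simpa [Nspan, neg_sub] using this
    have h3 := auxF_nonneg n Pm hPm a h2
    rw [auxF_sub_eps, if_pos le_rfl, if_neg (not_le.mpr hab)] at h3
    norm_num at h3

lemma aux_exists_of_neg_in_K (n : ℕ) (Pp Pm : Set (Fin n → ℝ)) (a b : Fin n) (hab : a < b)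
    (hK : eps n b - eps n a ∈ Kset n Pp Pm) :
    ∃ k k' : Fin n, (a : ℕ) ≤ (k : ℕ) ∧ (k' : ℕ) = (k : ℕ) + 1 ∧ (k' : ℕ) ≤ (b : ℕ) ∧
      eps n k - eps n k' ∉ Pm := by
  by_contra h
  push_neg at h
  have h2 : eps n a - eps n b ∈ AddSubmonoid.closure Pm :=
    aux_telescope n Pm ((b : ℕ) - (a : ℕ)) a b (by have := Fin.lt_def.mp hab; omega)
      (fun k k' h1 hk2 hk3 => h k k' h1 hk2 hk3)
  refine hK.2 ⟨Or.inr ?_, hK.1⟩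
  rw [Set.mem_neg]
  simpa [Nspan, neg_sub] using h2

lemma aux_exists_of_pos_in_K (n : ℕ) (Pp Pm : Set (Fin n → ℝ)) (a b : Fin n) (hab : a < b)
    (hK : eps n a - eps n b ∈ Kset n Pp Pm) :
    ∃ k k' : Fin n, (a : ℕ) ≤ (k : ℕ) ∧ (k' : ℕ) = (k : ℕ) + 1 ∧ (k' : ℕ) ≤ (b : ℕ) ∧
      eps n k - eps n k' ∉ Pp := by
  by_contra h
  push_neg at h
  have h2 : eps n a - eps n b ∈ AddSubmonoid.closure Pp :=
    aux_telescope n Pp ((b : ℕ) - (a : ℕ)) a b (by have := Fin.lt_def.mp hab; omega)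
      (fun k k' h1 hk2 hk3 => h k k' h1 hk2 hk3)
  exact hK.2 ⟨Or.inl h2, hK.1⟩

/-- Lemma 9.2: joining straightened edges. (a) Given arcs `ε_{a_i} − ε_{b_i} ∈ (−K) ∩ Δ⁺` with
`a_1 < … < a_r` and `b_{i+1} ≠ a_i`, each `ε_{b_{i+1}} − ε_{a_i}` is a root lying in `K`.
(b) The analogous statement with `(−K) ∩ Δ⁻` and `ε_{b_j} − ε_{a_{j+1}}`. -/
theorem statement_15 (n : ℕ) (hn : 2 ≤ n) (Pp Pm : Set (Fin n → ℝ))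
    (hPp : Pp ⊆ simpleRoots n) (hPm : Pm ⊆ simpleRoots n)
    (hU : Pp ∪ Pm = simpleRoots n) :
    (∀ r : ℕ, 2 ≤ r → ∀ a b : ℕ → Fin n,
      (∀ i, i + 1 < r → a i < a (i + 1)) →
      (∀ i, i < r → eps n (a i) - eps n (b i) ∈ (-Kset n Pp Pm) ∩ DeltaPos n) →
      (∀ i, i + 1 < r → b (i + 1) ≠ a i) →
      ∀ i, i + 1 < r →
        eps n (b (i + 1)) - eps n (a i) ∈ Delta n ∧
        eps n (b (i + 1)) - eps n (a i) ∈ Kset n Pp Pm) ∧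
    (∀ s : ℕ, 2 ≤ s → ∀ a b : ℕ → Fin n,
      (∀ j, j + 1 < s → a j < a (j + 1)) →
      (∀ j, j < s → eps n (a j) - eps n (b j) ∈ (-Kset n Pp Pm) ∩ DeltaNeg n) →
      (∀ j, j + 1 < s → b j ≠ a (j + 1)) →
      ∀ j, j + 1 < s →
        eps n (b j) - eps n (a (j + 1)) ∈ Delta n ∧
        eps n (b j) - eps n (a (j + 1)) ∈ Kset n Pp Pm) := by
  constructor
  · intro r hr a b hmono harc hne i hi
    obtain ⟨hK, hpos⟩ := harc (i + 1) hi
    obtain ⟨p, q, hpq, hEq⟩ := hpos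
    obtain ⟨hp, hq⟩ := aux_eps_inj n p q (a (i+1)) (b (i+1)) hpq.ne hEq.symm
    subst hp; subst hq
    -- so a (i+1) < b (i+1), i.e. hpq
    have hK' : eps n (b (i+1)) - eps n (a (i+1)) ∈ Kset n Pp Pm := by
      have := Set.mem_neg.mp hK
      simpa [neg_sub] using this
    obtain ⟨k, k', hk1, hk2, hk3, hk4⟩ :=
      aux_exists_of_neg_in_K n Pp Pm (a (i+1)) (b (i+1)) hpq hK'
    have hlt : a i < a (i + 1) := hmono i hi
    have hab : a i < b (i + 1) := by
      rw [Fin.lt_def] at hlt ⊢; omega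
    refine ⟨⟨b (i+1), a i, hab.ne', rfl⟩, ?_⟩
    exact aux_neg_in_K n Pp Pm hPp hPm (a i) (b (i+1)) hab k k'
      (by rw [Fin.lt_def] at hlt; omega) hk2 hk3 hk4
  · intro s hs a b hmono harc hne j hj
    obtain ⟨hK, hneg⟩ := harc j (by omega)
    have hneg' : eps n (b j) - eps n (a j) ∈ DeltaPos n := by
      have := Set.mem_neg.mp hneg
      simpa [DeltaNeg, neg_sub] using this
    obtain ⟨p, q, hpq, hEq⟩ := hneg'
    obtain ⟨hp, hq⟩ := aux_eps_inj n p q (b j) (a j) hpq.ne hEq.symm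
    subst hp; subst hq
    -- so b j < a j, i.e. hpq
    have hK' : eps n (b j) - eps n (a j) ∈ Kset n Pp Pm := by
      have := Set.mem_neg.mp hK
      simpa [neg_sub] using this
    obtain ⟨k, k', hk1, hk2, hk3, hk4⟩ :=
      aux_exists_of_pos_in_K n Pp Pm (b j) (a j) hpq hK'
    have hlt : a j < a (j + 1) := hmono j hj
    have hab : b j < a (j + 1) := by
      rw [Fin.lt_def] at hlt ⊢
      have := Fin.lt_def.mp hpq; omega
    refine ⟨⟨b j, a (j+1), hab.ne, rfl⟩, ?_⟩
    exact aux_pos_in_K n Pp Pm hPp hPm (b j) (a (j+1)) hab k k' hk1 hk2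
      (by rw [Fin.lt_def] at hlt; omega) hk4
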